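/- There exist a modulus function γ and a Lebesgue measurable set B ⊆ ℝ such that 0 is a Lebesgue density point of B but 0 is not a γ-density point of B. Concretely, one may take γ(t) = 1/log(e/t) for 0 < t ≤ e⁻¹ (extended affinely for t > e⁻¹, with γ(0)=0), and B the complement of a union of intervals Iₙ ∪ (−Iₙ) where Iₙ = (2^{−(n+1)}, 2^{−(n+1)} + δₙ/2) with δₙ = 4^{−n} − 4^{−(n+1)}; then |Bᶜ ∩ (−h,h)|/(2h) → 0 but γ(|Bᶜ ∩ (−h,h)|)/γ(2h) → 1/2 as h → 0⁺. -/

import Mathlib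

open MeasureTheory Set Filter Topology

/-- γ is a modulus function (on [0,∞); values and hypotheses only matter for nonnegative arguments). -/
def IsModulus (γ : ℝ → ℝ) : Prop :=
  (∀ a, 0 ≤ a → 0 ≤ γ a) ∧
  (∀ a, 0 ≤ a → (γ a = 0 ↔ a = 0)) ∧
  (∀ a b, 0 ≤ a → 0 ≤ b → γ (a + b) ≤ γ a + γ b) ∧
  ContinuousWithinAt γ (Set.Ici 0) 0 ∧
  (∀ a b, 0 ≤ a → a ≤ b → γ a ≤ γ b)

/-- |(x-α, x+α) ∩ Aᶜ| -/
noncomputable def mInt (A : Set ℝ) (x α : ℝ) : ℝ :=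
  (volume (Set.Ioo (x - α) (x + α) ∩ Aᶜ)).toReal

/-- x is a γ-density point of A. -/
def IsGammaDensityPt (γ : ℝ → ℝ) (A : Set ℝ) (x : ℝ) : Prop :=
  Tendsto (fun α => γ (mInt A x α) / γ (2 * α)) (𝓝[>] (0:ℝ)) (𝓝 0)

/-- x is a Lebesgue density point of A. -/
def IsLebDensityPt (A : Set ℝ) (x : ℝ) : Prop :=
  Tendsto (fun α => mInt A x α / (2 * α)) (𝓝[>] (0:ℝ)) (𝓝 0)

noncomputable def gam : ℝ → ℝ := fun t =>
  if t ≤ 0 then 0 else if t ≤ Real.exp (-1) then (1 - Real.log t)⁻¹ else 1/2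

lemma gam_zero : gam 0 = 0 := by simp [gam]

lemma log_le_neg_one {t : ℝ} (ht : 0 < t) (ht' : t ≤ Real.exp (-1)) :
    Real.log t ≤ -1 := by
  have := Real.log_le_log ht ht'
  simpa [Real.log_exp] using this

lemma gam_of_small {t : ℝ} (ht : 0 < t) (ht' : t ≤ Real.exp (-1)) :
    gam t = (1 - Real.log t)⁻¹ := by
  simp [gam, not_le.2 ht, ht']

lemma gam_pos {t : ℝ} (ht : 0 < t) : 0 < gam t := by
  unfold gam
  rw [if_neg (not_le.2 ht)]
  split_ifs with h
  · have h2 : (0:ℝ) < 1 - Real.log t := by have := log_le_neg_one ht h; linarith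
    positivity
  · norm_num

lemma gam_nonneg {t : ℝ} (ht : 0 ≤ t) : 0 ≤ gam t := by
  rcases eq_or_lt_of_le ht with h | h
  · simp [← h, gam_zero]
  · exact (gam_pos h).le

-- h(t) = t*(1-log t) monotone on Ioc 0 e⁻¹
lemma aux_mono : MonotoneOn (fun t : ℝ => t * (1 - Real.log t)) (Ioc 0 (Real.exp (-1))) := by
  have hconv : Convex ℝ (Ioc (0:ℝ) (Real.exp (-1))) := convex_Ioc _ _
  have hint : interior (Ioc (0:ℝ) (Real.exp (-1))) = Ioo 0 (Real.exp (-1)) := interior_Ioc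
  have hd : ∀ x ∈ Ioo (0:ℝ) (Real.exp (-1)), HasDerivAt (fun t : ℝ => t * (1 - Real.log t)) (-Real.log x) x := by
    intro x hx
    have h1 : HasDerivAt (fun t : ℝ => t * (1 - Real.log t)) (1 * (1 - Real.log x) + x * (0 - x⁻¹)) x :=
      (hasDerivAt_id x).mul ((hasDerivAt_const x 1).sub (Real.hasDerivAt_log hx.1.ne'))
    convert h1 using 1
    field_simp [hx.1.ne']; ring
  apply monotoneOn_of_deriv_nonneg hconv
  · apply ContinuousOn.mul continuousOn_id
    exact continuousOn_const.sub (Real.continuousOn_log.mono (fun x hx => ne_of_gt hx.1))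
  · rw [hint]
    intro x hx
    exact (hd x hx).differentiableAt.differentiableWithinAt
  · rw [hint]
    intro x hx
    rw [(hd x hx).deriv]
    have : Real.log x ≤ -1 := log_le_neg_one hx.1 hx.2.le
    linarith

lemma gam_mono : ∀ a b : ℝ, 0 ≤ a → a ≤ b → gam a ≤ gam b := by
  intro a b ha hab
  rcases eq_or_lt_of_le ha with h | h
  · rw [← h, gam_zero]; exact gam_nonneg (h ▸ hab)
  have hb : 0 < b := lt_of_lt_of_le h hab
  unfold gam
  rw [if_neg (not_le.2 h), if_neg (not_le.2 hb)]
  by_cases hbe : b ≤ Real.exp (-1)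
  · have hae : a ≤ Real.exp (-1) := hab.trans hbe
    rw [if_pos hae, if_pos hbe]
    have h2 : (2:ℝ) ≤ 1 - Real.log b := by have := log_le_neg_one hb hbe; linarith
    have : Real.log a ≤ Real.log b := Real.log_le_log h hab
    apply inv_anti₀ (by linarith) (by linarith)
  · rw [if_neg hbe]
    by_cases hae : a ≤ Real.exp (-1)
    · rw [if_pos hae]
      have h2 : (2:ℝ) ≤ 1 - Real.log a := by have := log_le_neg_one h hae; linarith
      rw [inv_le_comm₀ (by linarith) (by norm_num)]
      norm_num; linarith
    · rw [if_neg hae]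

-- ratio lemma: gam t / t ≤ gam s / s for 0 < s ≤ t
lemma gam_ratio {s t : ℝ} (hs : 0 < s) (hst : s ≤ t) : gam t / t ≤ gam s / s := by
  have ht : 0 < t := lt_of_lt_of_le hs hst
  have hmono := aux_mono
  by_cases hte : t ≤ Real.exp (-1)
  · have hse : s ≤ Real.exp (-1) := hst.trans hte
    rw [gam_of_small hs hse, gam_of_small ht hte]
    have h2s : (2:ℝ) ≤ 1 - Real.log s := by have := log_le_neg_one hs hse; linarith
    have h2t : (2:ℝ) ≤ 1 - Real.log t := by have := log_le_neg_one ht hte; linarith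
    have key : s * (1 - Real.log s) ≤ t * (1 - Real.log t) :=
      hmono ⟨hs, hse⟩ ⟨ht, hte⟩ hst
    rw [div_eq_mul_inv, div_eq_mul_inv, ← mul_inv, ← mul_inv]
    have key' : (1 - Real.log s) * s ≤ (1 - Real.log t) * t := by
      calc (1 - Real.log s) * s = s * (1 - Real.log s) := mul_comm _ _
        _ ≤ t * (1 - Real.log t) := key
        _ = (1 - Real.log t) * t := mul_comm _ _
    exact inv_anti₀ (by positivity) key'
  · have hgt : gam t = 1/2 := by simp [gam, not_le.2 ht, hte]
    by_cases hse : s ≤ Real.exp (-1)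
    · rw [gam_of_small hs hse, hgt]
      have h2s : (2:ℝ) ≤ 1 - Real.log s := by have := log_le_neg_one hs hse; linarith
      have key : s * (1 - Real.log s) ≤ Real.exp (-1) * (1 - Real.log (Real.exp (-1))) :=
        hmono ⟨hs, hse⟩ ⟨Real.exp_pos _, le_refl _⟩ hse
      rw [Real.log_exp] at key
      have key2 : s * (1 - Real.log s) ≤ 2 * t := by
        have : Real.exp (-1) ≤ t := le_of_not_ge hte
        nlinarith [Real.exp_pos (-1:ℝ)]
      have hpos : 0 < 1 - Real.log s := by linarith
      rw [div_le_div_iff₀ ht hs, mul_comm ((1 - Real.log s)⁻¹) t, ← div_eq_mul_inv,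
        le_div_iff₀ hpos]
      nlinarith [key2]
    · have hgs : gam s = 1/2 := by simp [gam, not_le.2 hs, hse]
      rw [hgs, hgt]
      apply div_le_div_of_nonneg_left (by norm_num) hs hst

lemma gam_subadd : ∀ a b : ℝ, 0 ≤ a → 0 ≤ b → gam (a + b) ≤ gam a + gam b := by
  intro a b ha hb
  rcases eq_or_lt_of_le ha with h | h
  · simp [← h, gam_zero]
  rcases eq_or_lt_of_le hb with h' | h'
  · simp [← h', gam_zero]
  have hab : 0 < a + b := by linarith
  have r1 := gam_ratio h (by linarith : a ≤ a + b)
  have r2 := gam_ratio h' (by linarith : b ≤ a + b)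
  rw [div_le_div_iff₀ hab h] at r1
  rw [div_le_div_iff₀ hab h'] at r2
  have : gam (a + b) * (a + b) = gam (a+b) * a + gam (a+b) * b := by ring
  nlinarith

lemma gam_cont : ContinuousWithinAt gam (Set.Ici 0) 0 := by
  have : Set.Ici (0:ℝ) = insert 0 (Set.Ioi 0) := by
    rw [Set.Ioi_insert]
  rw [this, continuousWithinAt_insert_self]
  unfold ContinuousWithinAt
  rw [gam_zero]
  have h0 : Tendsto (fun t : ℝ => -Real.log t) (𝓝[>] 0) atTop :=
    tendsto_neg_atBot_atTop.comp Real.tendsto_log_nhdsGT_zero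
  have h1 : Tendsto (fun t : ℝ => 1 - Real.log t) (𝓝[>] 0) atTop := by
    simpa [sub_eq_add_neg] using tendsto_atTop_add_const_left (𝓝[>] (0:ℝ)) (1:ℝ) h0
  have h2 : Tendsto (fun t : ℝ => (1 - Real.log t)⁻¹) (𝓝[>] 0) (𝓝 0) :=
    h1.inv_tendsto_atTop
  apply h2.congr'
  filter_upwards [Ioo_mem_nhdsGT_of_mem (Set.left_mem_Ico.2 (Real.exp_pos (-1)))] with t ht
  exact (gam_of_small ht.1 ht.2.le).symm

lemma gam_eq_zero_iff : ∀ a : ℝ, 0 ≤ a → (gam a = 0 ↔ a = 0) := by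
  intro a ha
  constructor
  · intro h
    by_contra h'
    exact absurd h (ne_of_gt (gam_pos (ha.lt_of_ne (Ne.symm h'))))
  · intro h; simp [h, gam_zero]

lemma gam_modulus : IsModulus gam :=
  ⟨fun a ha => gam_nonneg ha, gam_eq_zero_iff, gam_subadd, gam_cont, gam_mono⟩


def Cset : Set ℝ := ⋃ n : ℕ, Ioo ((1/2:ℝ)^(n+1) - (1/4:ℝ)^(n+1)) ((1/2:ℝ)^(n+1))

def Bset : Set ℝ := Csetᶜ

lemma Bset_meas : MeasurableSet Bset :=
  (MeasurableSet.iUnion fun _ => measurableSet_Ioo).compl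

lemma mInt_Bset (h : ℝ) : mInt Bset 0 h = (volume (Ioo (-h) h ∩ Cset)).toReal := by
  simp [mInt, Bset, compl_compl, zero_sub, zero_add]

lemma vol_fin (h : ℝ) : volume (Ioo (-h) h ∩ Cset) < ⊤ :=
  lt_of_le_of_lt (measure_mono inter_subset_left)
    (by rw [Real.volume_Ioo]; exact ENNReal.ofReal_lt_top)

lemma mInt_nonneg (A : Set ℝ) (x α : ℝ) : 0 ≤ mInt A x α := ENNReal.toReal_nonneg

lemma vol_upper {n : ℕ} {h : ℝ} (h0 : 0 < h) (hn : h ≤ (1/2:ℝ)^(n+1)) :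
    volume (Ioo (-h) h ∩ Cset) ≤ ENNReal.ofReal ((4/3) * (1/4:ℝ)^(n+1)) := by
  have hsub : Ioo (-h) h ∩ Cset ⊆
      ⋃ j : ℕ, Ioo ((1/2:ℝ)^(n+j+1) - (1/4:ℝ)^(n+j+1)) ((1/2:ℝ)^(n+j+1)) := by
    rintro x ⟨hx, hc⟩
    rw [Cset, mem_iUnion] at hc
    obtain ⟨k, hk⟩ := hc
    rcases le_or_gt n k with hnk | hkn
    · exact mem_iUnion.2 ⟨k - n, by rwa [Nat.add_sub_cancel' hnk]⟩
    · exfalso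
      have h1 : (1/4:ℝ)^(k+1) ≤ (1/2:ℝ)^(k+2) := by
        have : (1/4:ℝ)^(k+1) = (1/2:ℝ)^(2*(k+1)) := by
          rw [pow_mul]; norm_num
        rw [this]
        apply pow_le_pow_of_le_one (by norm_num) (by norm_num)
        omega
      have h2 : (1/2:ℝ)^(k+2) ≥ (1/2:ℝ)^(n+1) := by
        apply pow_le_pow_of_le_one (by norm_num) (by norm_num)
        omega
      have h3 : (1/2:ℝ)^(k+1) - (1/4:ℝ)^(k+1) ≥ (1/2:ℝ)^(n+1) := by
        have : (1/2:ℝ)^(k+1) = 2 * (1/2:ℝ)^(k+2) := by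
          rw [pow_succ]; ring
        nlinarith [h1, h2]
      have := hk.1
      have := hx.2
      linarith
  calc volume (Ioo (-h) h ∩ Cset)
      ≤ volume (⋃ j : ℕ, Ioo ((1/2:ℝ)^(n+j+1) - (1/4:ℝ)^(n+j+1)) ((1/2:ℝ)^(n+j+1))) :=
        measure_mono hsub
    _ ≤ ∑' j : ℕ, volume (Ioo ((1/2:ℝ)^(n+j+1) - (1/4:ℝ)^(n+j+1)) ((1/2:ℝ)^(n+j+1))) :=
        measure_iUnion_le _
    _ = ∑' j : ℕ, ENNReal.ofReal ((1/4:ℝ)^(n+j+1)) := by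
        congr 1; funext j
        rw [Real.volume_Ioo, sub_sub_cancel]
    _ = ENNReal.ofReal (∑' j : ℕ, (1/4:ℝ)^(n+j+1)) := by
        rw [ENNReal.ofReal_tsum_of_nonneg (fun j => by positivity)]
        apply Summable.comp_injective (summable_geometric_of_lt_one (by norm_num) (by norm_num))
          (fun a b hab => by omega)
    _ = ENNReal.ofReal ((4/3) * (1/4:ℝ)^(n+1)) := by
        congr 1
        have : ∀ j : ℕ, (1/4:ℝ)^(n+j+1) = (1/4:ℝ)^(n+1) * (1/4:ℝ)^j := by
          intro j; rw [← pow_add]; ring_nf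
        rw [tsum_congr this, tsum_mul_left, tsum_geometric_of_lt_one (by norm_num) (by norm_num)]
        norm_num; ring

lemma mInt_upper {n : ℕ} {h : ℝ} (h0 : 0 < h) (hn : h ≤ (1/2:ℝ)^(n+1)) :
    mInt Bset 0 h ≤ (4/3) * (1/4:ℝ)^(n+1) := by
  rw [mInt_Bset]
  exact ENNReal.toReal_le_of_le_ofReal (by positivity) (vol_upper h0 hn)

lemma mInt_lower (n : ℕ) :
    ((1/2:ℝ)^(n+1))^2 ≤ mInt Bset 0 ((1/2:ℝ)^(n+1)) := by
  have hsq : ((1/2:ℝ)^(n+1))^2 = (1/4:ℝ)^(n+1) := by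
    rw [sq, ← mul_pow]; norm_num
  rw [mInt_Bset, hsq]
  have hsub : Ioo ((1/2:ℝ)^(n+1) - (1/4:ℝ)^(n+1)) ((1/2:ℝ)^(n+1)) ⊆
      Ioo (-(1/2:ℝ)^(n+1)) ((1/2:ℝ)^(n+1)) ∩ Cset := by
    intro x hx
    refine ⟨⟨?_, hx.2⟩, mem_iUnion.2 ⟨n, hx⟩⟩
    have h1 : (1/4:ℝ)^(n+1) ≤ (1/2:ℝ)^(n+1) := by
      apply pow_le_pow_left₀ (by norm_num) (by norm_num)
    have h2 : (0:ℝ) < (1/2:ℝ)^(n+1) := by positivity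
    nlinarith [hx.1]
  have hv : ENNReal.ofReal ((1/4:ℝ)^(n+1)) ≤ volume (Ioo (-(1/2:ℝ)^(n+1)) ((1/2:ℝ)^(n+1)) ∩ Cset) := by
    calc ENNReal.ofReal ((1/4:ℝ)^(n+1))
        = volume (Ioo ((1/2:ℝ)^(n+1) - (1/4:ℝ)^(n+1)) ((1/2:ℝ)^(n+1))) := by
          rw [Real.volume_Ioo, sub_sub_cancel]
      _ ≤ _ := measure_mono hsub
  have := ENNReal.toReal_mono (vol_fin ((1/2:ℝ)^(n+1))).ne hv
  rwa [ENNReal.toReal_ofReal (by positivity)] at this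

lemma mInt_quad {h : ℝ} (h0 : 0 < h) (h12 : h ≤ 1/2) :
    mInt Bset 0 h ≤ (16/3) * h^2 := by
  have hex : ∃ k : ℕ, (1/2:ℝ)^(k+1) < h := by
    obtain ⟨k, hk⟩ := exists_pow_lt_of_lt_one h0 (by norm_num : (1/2:ℝ) < 1)
    exact ⟨k, lt_of_le_of_lt (pow_le_pow_of_le_one (by norm_num) (by norm_num) (by omega)) hk⟩
  classical
  have hlt : (1/2:ℝ)^(Nat.find hex + 1) < h := Nat.find_spec hex
  have hne : Nat.find hex ≠ 0 := by
    intro h0n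
    rw [h0n] at hlt
    norm_num at hlt
    linarith
  obtain ⟨m, hm⟩ := Nat.exists_eq_succ_of_ne_zero hne
  rw [hm] at hlt
  have hle : h ≤ (1/2:ℝ)^(m+1) := le_of_not_gt (Nat.find_min hex (by omega))
  have := mInt_upper h0 hle
  have key : (1/2:ℝ)^(m+1) = 2 * (1/2:ℝ)^(m+2) := by rw [pow_succ]; ring
  have hsq : (1/4:ℝ)^(m+1) = ((1/2:ℝ)^(m+1))^2 := by rw [sq, ← mul_pow]; norm_num
  have hpos : (0:ℝ) < (1/2:ℝ)^(m+2) := by positivity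
  have hlt' : (1/2:ℝ)^(m+2) < h := by
    have : m + 1 + 1 = m + 2 := rfl
    rwa [this] at hlt
  have hsq2 : ((1/2:ℝ)^(m+2))^2 ≤ h^2 := pow_le_pow_left₀ hpos.le hlt'.le 2
  have heq : (1/4:ℝ)^(m+1) = 4 * ((1/2:ℝ)^(m+2))^2 := by rw [hsq, key]; ring
  linarith

lemma leb_dens : IsLebDensityPt Bset 0 := by
  unfold IsLebDensityPt
  apply squeeze_zero' (g := fun h => (8/3) * h)
  · filter_upwards [self_mem_nhdsWithin] with h hh
    have h2 : (0:ℝ) < 2 * h := by simpa using mul_pos two_pos (show (0:ℝ) < h from hh)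
    exact div_nonneg (mInt_nonneg _ _ _) h2.le
  · filter_upwards [Ioc_mem_nhdsGT_of_mem (Set.left_mem_Ico.2 (by norm_num : (0:ℝ) < 1/2))]
      with h hh
    have h0 : 0 < h := hh.1
    have := mInt_quad h0 hh.2
    rw [div_le_iff₀ (by linarith : (0:ℝ) < 2*h)]
    nlinarith
  · have : Tendsto (fun h : ℝ => (8/3) * h) (𝓝 0) (𝓝 0) := by
      simpa using (tendsto_id (x := 𝓝 (0:ℝ))).const_mul (8/3:ℝ)
    exact this.mono_left nhdsWithin_le_nhds


lemma not_gam_dens : ¬ IsGammaDensityPt gam Bset 0 := by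
  intro H
  have hu0 : Tendsto (fun n : ℕ => (1/2:ℝ)^(n+1)) atTop (𝓝 0) := by
    have := tendsto_pow_atTop_nhds_zero_of_lt_one (by norm_num : (0:ℝ) ≤ 1/2)
      (by norm_num : (1/2:ℝ) < 1)
    exact this.comp (tendsto_add_atTop_nat 1)
  have hu : Tendsto (fun n : ℕ => (1/2:ℝ)^(n+1)) atTop (𝓝[>] 0) :=
    tendsto_nhdsWithin_of_tendsto_nhds_of_eventually_within _ hu0
      (Eventually.of_forall fun n => Set.mem_Ioi.2 (by positivity))
  have H2 := H.comp hu
  have hlt : ∀ᶠ n : ℕ in atTop,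
      gam (mInt Bset 0 ((1/2:ℝ)^(n+1))) / gam (2 * (1/2:ℝ)^(n+1)) < 1/4 :=
    H2.eventually (eventually_lt_nhds (by norm_num : (0:ℝ) < 1/4))
  have hsmall : ∀ᶠ n : ℕ in atTop, (1/2:ℝ)^(n+1) < Real.exp (-1) / 2 :=
    hu0.eventually (eventually_lt_nhds (by positivity))
  obtain ⟨n, hn1, hn2⟩ := (hlt.and hsmall).exists
  set h := (1/2:ℝ)^(n+1) with hdef
  have h0 : 0 < h := by positivity
  have hexp1 : Real.exp (-1) < 1 := Real.exp_lt_one_iff.2 (by norm_num)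
  have h2h : 2*h ≤ Real.exp (-1) := by linarith
  have hh1 : h < 1 := by nlinarith [Real.exp_pos (-1:ℝ)]
  have hsqle : h^2 ≤ Real.exp (-1) := by nlinarith
  have hm : h^2 ≤ mInt Bset 0 h := mInt_lower n
  have hlog : Real.log h < 0 := Real.log_neg h0 hh1
  have hden : 0 < gam (2*h) := gam_pos (by linarith)
  have hnum : gam (h^2) ≤ gam (mInt Bset 0 h) := gam_mono _ _ (by positivity) hm
  have hr : gam (h^2) / gam (2*h) ≤ gam (mInt Bset 0 h) / gam (2*h) := by gcongr
  have e1 : gam (h^2) = (1 - Real.log (h^2))⁻¹ := gam_of_small (by positivity) hsqle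
  have e2 : gam (2*h) = (1 - Real.log (2*h))⁻¹ := gam_of_small (by linarith) h2h
  have l1 : Real.log (h^2) = 2 * Real.log h := by rw [sq, Real.log_mul h0.ne' h0.ne']; ring
  have l2 : Real.log (2*h) = Real.log 2 + Real.log h := Real.log_mul two_ne_zero h0.ne'
  have hq : (1/4:ℝ) ≤ gam (h^2) / gam (2*h) := by
    rw [e1, e2, l1, l2]
    have d1 : (0:ℝ) < 1 - 2*Real.log h := by linarith
    have d2 : (0:ℝ) < 1 - (Real.log 2 + Real.log h) := by
      nlinarith [Real.log_two_lt_d9]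
    rw [div_le_div_iff₀ (by norm_num) (by positivity), one_mul]
    have he : ((1 - 2*Real.log h)/4)⁻¹ = (1 - 2*Real.log h)⁻¹ * 4 := by
      rw [div_eq_mul_inv, mul_inv, inv_inv]
    rw [← he]
    apply inv_anti₀ (by positivity)
    nlinarith [Real.log_two_lt_d9]
  linarith


theorem stmt5 :
    ∃ (γ : ℝ → ℝ) (B : Set ℝ), IsModulus γ ∧ MeasurableSet B ∧
      IsLebDensityPt B 0 ∧ ¬ IsGammaDensityPt γ B 0 :=
  ⟨gam, Bset, gam_modulus, Bset_meas, leb_dens, not_gam_dens⟩
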